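/- (Estimate of the outer height) Let u be a solution of the capillary equation on [0, a] with u(0) = u₀ > 0, u'(0) = 0 and contact angle condition sin ψ(a) = cos γ for some γ ∈ [0, π/2). Then u(a) < cos γ/(κ a) − (a/2) tan γ + (a/(2 cos² γ))(π/2 − γ). -/

import Mathlib

lemma my_rpow_32 {y : ℝ} (hy : 0 < y) : y ^ ((3:ℝ)/2) = y * Real.sqrt y := by
  rw [Real.sqrt_eq_rpow, ← Real.rpow_one_add' hy.le (by norm_num)]
  norm_num

lemma hasDerivAt_sin_psi (x : ℝ) :
    HasDerivAt (fun x : ℝ => x / Real.sqrt (1 + x ^ 2))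
      (((1 + x ^ 2) * Real.sqrt (1 + x ^ 2))⁻¹) x := by
  have h1 : (0:ℝ) < 1 + x ^ 2 := by positivity
  have hs : 0 < Real.sqrt (1 + x ^ 2) := Real.sqrt_pos.2 h1
  have hinner : HasDerivAt (fun x : ℝ => 1 + x ^ 2) (2 * x) x := by
    simpa using ((hasDerivAt_pow 2 x).const_add 1)
  have hsq : HasDerivAt (fun x : ℝ => Real.sqrt (1 + x ^ 2))
      (1 / (2 * Real.sqrt (1 + x ^ 2)) * (2 * x)) x := by
    simpa [Function.comp_def] using ((Real.hasDerivAt_sqrt h1.ne').comp x hinner)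
  have := (hasDerivAt_id x).div hsq hs.ne'
  refine this.congr_deriv (Eq.symm ?_)
  have hss : Real.sqrt (1 + x ^ 2) ^ 2 = 1 + x ^ 2 := Real.sq_sqrt h1.le
  simp only [id]
  field_simp
  linear_combination (-x^2) * hss

lemma sinpsi_lt_one (x : ℝ) : x / Real.sqrt (1 + x ^ 2) < 1 := by
  have h1 : (0:ℝ) < 1 + x ^ 2 := by positivity
  have hs : 0 < Real.sqrt (1 + x ^ 2) := Real.sqrt_pos.2 h1
  rw [div_lt_one hs]
  nlinarith [Real.sq_sqrt h1.le, hs, sq_nonneg (x - Real.sqrt (1 + x ^ 2))]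

lemma g_inv (x : ℝ) :
    (x / Real.sqrt (1 + x ^ 2)) / Real.sqrt (1 - (x / Real.sqrt (1 + x ^ 2)) ^ 2) = x := by
  have h1 : (0:ℝ) < 1 + x ^ 2 := by positivity
  have hs : 0 < Real.sqrt (1 + x ^ 2) := Real.sqrt_pos.2 h1
  have hs2 : Real.sqrt (1 + x ^ 2) ^ 2 = 1 + x ^ 2 := Real.sq_sqrt h1.le
  have h : 1 - (x / Real.sqrt (1 + x ^ 2)) ^ 2 = (1 / Real.sqrt (1 + x ^ 2)) ^ 2 := by
    field_simp
    linarith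
  rw [h, Real.sqrt_sq (by positivity)]
  field_simp

lemma g_strictMono {t₁ t₂ : ℝ} (h0 : 0 ≤ t₁) (h12 : t₁ < t₂) (h2 : t₂ < 1) :
    t₁ / Real.sqrt (1 - t₁ ^ 2) < t₂ / Real.sqrt (1 - t₂ ^ 2) := by
  have h1' : t₁ < 1 := h12.trans h2
  have hd1 : 0 < Real.sqrt (1 - t₁ ^ 2) := Real.sqrt_pos.2 (by nlinarith)
  have hd2 : 0 < Real.sqrt (1 - t₂ ^ 2) := Real.sqrt_pos.2 (by nlinarith)
  have hle : Real.sqrt (1 - t₂ ^ 2) ≤ Real.sqrt (1 - t₁ ^ 2) :=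
    Real.sqrt_le_sqrt (by nlinarith)
  calc t₁ / Real.sqrt (1 - t₁ ^ 2) ≤ t₁ / Real.sqrt (1 - t₂ ^ 2) := by
        apply div_le_div_of_nonneg_left h0 hd2 hle
    _ < t₂ / Real.sqrt (1 - t₂ ^ 2) := by
        exact div_lt_div_of_pos_right h12 hd2

lemma hasDerivAt_G (k r : ℝ) (hk : k ≠ 0) (h : (k * r) ^ 2 < 1) :
    HasDerivAt (fun r : ℝ => -(1/k) * Real.sqrt (1 - (k * r) ^ 2))
      ((k * r) / Real.sqrt (1 - (k * r) ^ 2)) r := by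
  have hq : (0:ℝ) < 1 - (k * r) ^ 2 := by linarith
  have hs : 0 < Real.sqrt (1 - (k * r) ^ 2) := Real.sqrt_pos.2 hq
  have hinner : HasDerivAt (fun r : ℝ => 1 - (k * r) ^ 2) (-(2 * k ^ 2 * r)) r := by
    have h1 : HasDerivAt (fun r : ℝ => k * r) k r := by
      simpa using (hasDerivAt_id r).const_mul k
    have h2 : HasDerivAt (fun r : ℝ => (k * r) ^ 2) ((2 * (k * r) ^ 1) * k) r :=
      ((hasDerivAt_pow 2 (k * r)).comp r h1 :)
    have h3 := h2.const_sub 1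
    refine h3.congr_deriv (Eq.symm ?_)
    ring
  have hsq : HasDerivAt (fun r : ℝ => Real.sqrt (1 - (k * r) ^ 2))
      (1 / (2 * Real.sqrt (1 - (k * r) ^ 2)) * (-(2 * k ^ 2 * r))) r := by
    simpa [Function.comp_def] using ((Real.hasDerivAt_sqrt hq.ne').comp r hinner)
  have := hsq.const_mul (-(1/k))
  refine this.congr_deriv (Eq.symm ?_)
  field_simp

lemma hasDerivAt_Psi (k r : ℝ) (hk : k ≠ 0) (h : (k * r) ^ 2 < 1) :
    HasDerivAt (fun r : ℝ => (1/(2*k)) *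
        (Real.arcsin (k * r) + (k * r) * Real.sqrt (1 - (k * r) ^ 2)))
      (Real.sqrt (1 - (k * r) ^ 2)) r := by
  have hq : (0:ℝ) < 1 - (k * r) ^ 2 := by linarith
  have hs : 0 < Real.sqrt (1 - (k * r) ^ 2) := Real.sqrt_pos.2 hq
  have hs2 : Real.sqrt (1 - (k * r) ^ 2) ^ 2 = 1 - (k * r) ^ 2 := Real.sq_sqrt hq.le
  have h1 : HasDerivAt (fun r : ℝ => k * r) k r := by
    simpa using (hasDerivAt_id r).const_mul k
  have hne1 : k * r ≠ -1 := by intro hc; rw [hc] at h; norm_num at h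
  have hne2 : k * r ≠ 1 := by intro hc; rw [hc] at h; norm_num at h
  have harc : HasDerivAt (fun r : ℝ => Real.arcsin (k * r))
      (1 / Real.sqrt (1 - (k * r) ^ 2) * k) r :=
    ((Real.hasDerivAt_arcsin hne1 hne2).comp r h1 :)
  have hinner : HasDerivAt (fun r : ℝ => 1 - (k * r) ^ 2) (-(2 * k ^ 2 * r)) r := by
    have h2 : HasDerivAt (fun r : ℝ => (k * r) ^ 2) ((2 * (k * r) ^ 1) * k) r :=
      ((hasDerivAt_pow 2 (k * r)).comp r h1 :)
    have h3 := h2.const_sub 1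
    refine h3.congr_deriv (Eq.symm ?_)
    ring
  have hsq : HasDerivAt (fun r : ℝ => Real.sqrt (1 - (k * r) ^ 2))
      (1 / (2 * Real.sqrt (1 - (k * r) ^ 2)) * (-(2 * k ^ 2 * r))) r := by
    simpa [Function.comp_def] using ((Real.hasDerivAt_sqrt hq.ne').comp r hinner)
  have hmul := h1.mul hsq
  have := (harc.add hmul).const_mul (1/(2*k))
  refine this.congr_deriv (Eq.symm ?_)
  field_simp
  ring_nf
  have hs2' : Real.sqrt (1 - k ^ 2 * r ^ 2) ^ 2 = 1 - k ^ 2 * r ^ 2 := by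
    rw [← mul_pow]; exact hs2
  have hs' : Real.sqrt (1 - k ^ 2 * r ^ 2) ≠ 0 := by rw [← mul_pow]; exact hs.ne'
  field_simp
  linear_combination hs2'

/-- Estimate of the outer height:
u(a) < cos γ/(κa) − (a/2) tan γ + (a/(2cos²γ))(π/2 − γ). -/
theorem stmt_14 (κ a u₀ γ : ℝ) (hκ : 0 < κ) (ha : 0 < a) (u : ℝ → ℝ)
    (hu : Differentiable ℝ u) (hu' : Differentiable ℝ (deriv u))
    (hode : ∀ r ∈ Set.Icc (0 : ℝ) a,
      deriv (deriv u) r = κ * u r * (1 + (deriv u r) ^ 2) ^ ((3 : ℝ) / 2))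
    (hu0 : u 0 = u₀) (hu₀pos : 0 < u₀) (hdu0 : deriv u 0 = 0)
    (hγ0 : 0 ≤ γ) (hγ1 : γ < Real.pi / 2)
    (hangle : deriv u a / Real.sqrt (1 + (deriv u a) ^ 2) = Real.cos γ) :
    u a < Real.cos γ / (κ * a) - (a / 2) * Real.tan γ +
      (a / (2 * (Real.cos γ) ^ 2)) * (Real.pi / 2 - γ) := by
  have hπ := Real.pi_pos
  set v := deriv u with hv_def
  have hvc : Continuous v := hu'.continuous
  have huc : Continuous u := hu.continuous
  set c := Real.cos γ with hc_def
  have hc_pos : 0 < c := Real.cos_pos_of_mem_Ioo ⟨by linarith, hγ1⟩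
  have hc1 : c < 1 := by rw [← hangle]; exact sinpsi_lt_one (v a)
  -- mono pack
  have pack : ∀ t ∈ Set.Icc (0:ℝ) a, (∀ s ∈ Set.Ico (0:ℝ) t, 0 ≤ v s) →
      (∀ s ∈ Set.Icc (0:ℝ) t, u₀ ≤ u s) ∧ StrictMonoOn v (Set.Icc 0 t) := by
    intro t ht hvge
    have hmono : MonotoneOn u (Set.Icc 0 t) := by
      apply monotoneOn_of_deriv_nonneg (convex_Icc 0 t) huc.continuousOn
        (hu.differentiableOn)
      intro x hx
      rw [interior_Icc] at hx
      exact hvge x ⟨hx.1.le, hx.2⟩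
    have hul : ∀ s ∈ Set.Icc (0:ℝ) t, u₀ ≤ u s := by
      intro s hs
      rw [← hu0]
      exact hmono (Set.left_mem_Icc.2 (hs.1.trans hs.2)) hs hs.1
    refine ⟨hul, ?_⟩
    apply strictMonoOn_of_deriv_pos (convex_Icc 0 t) hvc.continuousOn
    intro x hx
    rw [interior_Icc] at hx
    have hx' : x ∈ Set.Icc (0:ℝ) a := ⟨hx.1.le, hx.2.le.trans ht.2⟩
    rw [hode x hx']
    have hupos : 0 < u x := lt_of_lt_of_le hu₀pos (hul x ⟨hx.1.le, hx.2.le⟩)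
    exact mul_pos (mul_pos hκ hupos) (Real.rpow_pos_of_pos (by positivity) _)
  -- Step A: v nonneg on [0, a]
  have hv0 : ∀ s ∈ Set.Icc (0:ℝ) a, 0 ≤ v s := by
    by_contra hS
    push_neg at hS
    obtain ⟨s₀, hs₀, hvs₀⟩ := hS
    set S : Set ℝ := {s : ℝ | s ∈ Set.Icc (0:ℝ) a ∧ v s < 0} with hS_def
    have hSne : S.Nonempty := ⟨s₀, hs₀, hvs₀⟩
    have hSbdd : BddBelow S := ⟨0, fun x hx => hx.1.1⟩
    set t₀ := sInf S with ht₀_def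
    have ht₀cl : t₀ ∈ closure S := csInf_mem_closure hSne hSbdd
    have hsub : closure S ⊆ {s : ℝ | s ∈ Set.Icc (0:ℝ) a ∧ v s ≤ 0} := by
      apply closure_minimal
      · intro x hx
        exact ⟨hx.1, hx.2.le⟩
      · exact IsClosed.inter isClosed_Icc (isClosed_le hvc continuous_const)
    have ht₀ := hsub ht₀cl
    have hbelow : ∀ s ∈ Set.Ico (0:ℝ) t₀, 0 ≤ v s := by
      intro s hs
      by_contra h
      push_neg at h
      have hsS : s ∈ S := ⟨⟨hs.1, hs.2.le.trans ht₀.1.2⟩, h⟩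
      exact absurd (csInf_le hSbdd hsS) (not_le.2 hs.2)
    rcases eq_or_lt_of_le ht₀.1.1 with h0 | h0
    · -- t₀ = 0 : use positivity of u near 0
      have hupos : 0 < u 0 := by rw [hu0]; exact hu₀pos
      have hev : ∀ᶠ x in nhds (0:ℝ), 0 < u x :=
        (huc.tendsto 0).eventually (eventually_gt_nhds hupos)
      obtain ⟨δ, hδ, hball⟩ := Metric.eventually_nhds_iff.mp hev
      obtain ⟨s, hsS, hslt⟩ := exists_lt_of_csInf_lt hSne (by rw [← ht₀_def, ← h0]; exact hδ)
      have hs0 : 0 < s := by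
        rcases eq_or_lt_of_le hsS.1.1 with h | h
        · exfalso
          have h2 := hsS.2
          rw [← h, hdu0] at h2
          exact lt_irrefl 0 h2
        · exact h
      have hupos' : ∀ x ∈ Set.Icc (0:ℝ) s, 0 < u x := by
        intro x hx
        apply hball
        rw [Real.dist_eq, sub_zero, abs_of_nonneg hx.1]
        exact lt_of_le_of_lt hx.2 hslt
      have hvsm' : StrictMonoOn v (Set.Icc 0 s) := by
        apply strictMonoOn_of_deriv_pos (convex_Icc 0 s) hvc.continuousOn
        intro x hx
        rw [interior_Icc] at hx
        have hx' : x ∈ Set.Icc (0:ℝ) a := ⟨hx.1.le, hx.2.le.trans hsS.1.2⟩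
        rw [hode x hx']
        exact mul_pos (mul_pos hκ (hupos' x ⟨hx.1.le, hx.2.le⟩))
          (Real.rpow_pos_of_pos (by positivity) _)
      have := hvsm' (Set.left_mem_Icc.2 hs0.le) (Set.right_mem_Icc.2 hs0.le) hs0
      rw [hdu0] at this
      exact absurd this (not_lt.2 hsS.2.le)
    · -- 0 < t₀
      obtain ⟨_, hsm⟩ := pack t₀ ht₀.1 hbelow
      have := hsm (Set.left_mem_Icc.2 h0.le) (Set.right_mem_Icc.2 h0.le) h0
      rw [hdu0] at this
      exact absurd this (not_lt.2 ht₀.2)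
  obtain ⟨hu₀le, hvsm⟩ := pack a (Set.right_mem_Icc.2 ha.le)
    (fun s hs => hv0 s ⟨hs.1, hs.2.le⟩)
  have hvpos : ∀ s ∈ Set.Ioc (0:ℝ) a, 0 < v s := by
    intro s hs
    have := hvsm (Set.left_mem_Icc.2 ha.le) ⟨hs.1.le, hs.2⟩ hs.1
    rwa [hdu0] at this
  have husm : StrictMonoOn u (Set.Icc 0 a) := by
    apply strictMonoOn_of_deriv_pos (convex_Icc 0 a) huc.continuousOn
    intro x hx
    rw [interior_Icc] at hx
    exact hvpos x ⟨hx.1, hx.2.le⟩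
  -- the function F = sin ψ
  set F : ℝ → ℝ := fun r => v r / Real.sqrt (1 + v r ^ 2) with hF_def
  have hF0 : F 0 = 0 := by
    show v 0 / Real.sqrt (1 + v 0 ^ 2) = 0
    rw [hdu0]; norm_num
  have hFa : F a = c := hangle
  have hF : ∀ r ∈ Set.Icc (0:ℝ) a, HasDerivAt F (κ * u r) r := by
    intro r hr
    have hdv : HasDerivAt v (deriv v r) r := (hu' r).hasDerivAt
    have h1 := (hasDerivAt_sin_psi (v r)).comp r hdv
    rw [hode r hr] at h1
    have h2 : HasDerivAt F (((1 + v r ^ 2) * Real.sqrt (1 + v r ^ 2))⁻¹ *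
        (κ * u r * (1 + v r ^ 2) ^ ((3:ℝ)/2))) r := h1
    convert h2 using 1
    rw [my_rpow_32 (by positivity)]
    have hs : 0 < Real.sqrt (1 + v r ^ 2) := Real.sqrt_pos.2 (by positivity)
    field_simp
  have hFc : Continuous F := by
    apply hvc.div (by fun_prop)
    intro x
    positivity
  have hFconv : StrictConvexOn ℝ (Set.Icc 0 a) F := by
    apply StrictMonoOn.strictConvexOn_of_deriv (convex_Icc 0 a) hFc.continuousOn
    rw [interior_Icc]
    intro x hx y hy hxy
    rw [(hF x ⟨hx.1.le, hx.2.le⟩).deriv, (hF y ⟨hy.1.le, hy.2.le⟩).deriv]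
    exact mul_lt_mul_of_pos_left (husm ⟨hx.1.le, hx.2.le⟩ ⟨hy.1.le, hy.2.le⟩ hxy) hκ
  set k : ℝ := c / a with hk_def
  have hk : 0 < k := div_pos hc_pos ha
  have hka : k * a = c := by rw [hk_def]; field_simp
  have hk1 : ∀ r ∈ Set.Icc (0:ℝ) a, (k * r) ^ 2 < 1 := by
    intro r hr
    have h1 : 0 ≤ k * r := mul_nonneg hk.le hr.1
    have h2 : k * r ≤ c := by rw [← hka]; exact mul_le_mul_of_nonneg_left hr.2 hk.le
    nlinarith
  have hFlt : ∀ s ∈ Set.Ioo (0:ℝ) a, F s < k * s := by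
    intro s hs
    have h1 : (0:ℝ) ∈ Set.Icc (0:ℝ) a := Set.left_mem_Icc.2 ha.le
    have h2 : a ∈ Set.Icc (0:ℝ) a := Set.right_mem_Icc.2 ha.le
    have hlam1 : 0 < 1 - s/a := by
      rw [sub_pos, div_lt_one ha]; exact hs.2
    have hlam2 : 0 < s/a := div_pos hs.1 ha
    have h3 := hFconv.2 h1 h2 (ne_of_lt ha) hlam1 hlam2 (by ring)
    rw [smul_eq_mul, smul_eq_mul, smul_eq_mul, smul_eq_mul, hF0, hFa] at h3
    have harg : (1 - s/a) * 0 + s/a * a = s := by field_simp; ring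
    rw [harg] at h3
    calc F s < (1 - s/a) * 0 + s/a * c := h3
      _ = k * s := by rw [hk_def]; ring
  have hvlt : ∀ s ∈ Set.Ioo (0:ℝ) a, v s < (k * s) / Real.sqrt (1 - (k * s) ^ 2) := by
    intro s hs
    have hFs0 : 0 ≤ F s := div_nonneg (hv0 s ⟨hs.1.le, hs.2.le⟩) (Real.sqrt_nonneg _)
    have hlt := hFlt s hs
    have hks0 : 0 ≤ k * s := mul_nonneg hk.le hs.1.le
    have hks1 : k * s < 1 := by nlinarith [hk1 s ⟨hs.1.le, hs.2.le⟩]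
    calc v s = F s / Real.sqrt (1 - F s ^ 2) := (g_inv (v s)).symm
      _ < (k * s) / Real.sqrt (1 - (k * s) ^ 2) := g_strictMono hFs0 hlt hks1
  -- the comparison function
  set G : ℝ → ℝ := fun r => -(1/k) * Real.sqrt (1 - (k * r) ^ 2) with hG_def
  have hGc : Continuous G := by fun_prop
  set E : ℝ → ℝ := fun r => G r - u r with hE_def
  have hE : ∀ r ∈ Set.Icc (0:ℝ) a, HasDerivAt E ((k * r) / Real.sqrt (1 - (k * r) ^ 2) - v r) r :=
    fun r hr => (hasDerivAt_G k r hk.ne' (hk1 r hr)).sub (hu r).hasDerivAt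
  have hEsm : StrictMonoOn E (Set.Icc 0 a) := by
    apply strictMonoOn_of_deriv_pos (convex_Icc 0 a) (hGc.sub huc).continuousOn
    intro x hx
    rw [interior_Icc] at hx
    show 0 < deriv E x
    rw [(hE x ⟨hx.1.le, hx.2.le⟩).deriv]
    exact sub_pos.2 (hvlt x hx)
  -- integral of the gap is positive
  have hgap : 0 < ∫ r in (0:ℝ)..a, (E a - E r) := by
    apply intervalIntegral.intervalIntegral_pos_of_pos_on
      ((continuous_const.sub (hGc.sub huc)).intervalIntegrable 0 a) _ ha
    intro x hx
    exact sub_pos.2 (hEsm ⟨hx.1.le, hx.2.le⟩ (Set.right_mem_Icc.2 ha.le) hx.2)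
  -- FTC computations
  have hIu : ∫ r in (0:ℝ)..a, u r = c / κ := by
    have h1 : ∫ r in (0:ℝ)..a, κ * u r = F a - F 0 := by
      apply intervalIntegral.integral_eq_sub_of_hasDerivAt
      · intro x hx
        rw [Set.uIcc_of_le ha.le] at hx
        exact hF x hx
      · exact (continuous_const.mul huc).intervalIntegrable 0 a
    rw [hF0, hFa, sub_zero, intervalIntegral.integral_const_mul] at h1
    rw [eq_div_iff hκ.ne']
    linarith [h1]
  have hIG : ∫ r in (0:ℝ)..a, G r =
      -(1/k) * ((1/(2*k)) * (Real.arcsin c + c * Real.sqrt (1 - c ^ 2))) := by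
    have h1 : ∫ r in (0:ℝ)..a, Real.sqrt (1 - (k * r) ^ 2) =
        (fun r : ℝ => (1/(2*k)) *
          (Real.arcsin (k * r) + (k * r) * Real.sqrt (1 - (k * r) ^ 2))) a -
        (fun r : ℝ => (1/(2*k)) *
          (Real.arcsin (k * r) + (k * r) * Real.sqrt (1 - (k * r) ^ 2))) 0 := by
      apply intervalIntegral.integral_eq_sub_of_hasDerivAt
      · intro x hx
        rw [Set.uIcc_of_le ha.le] at hx
        exact hasDerivAt_Psi k x hk.ne' (hk1 x hx)
      · exact (Continuous.intervalIntegrable (by fun_prop) 0 a)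
    simp only [mul_zero, Real.arcsin_zero] at h1
    rw [hka] at h1
    have h2 : (∫ r in (0:ℝ)..a, G r) =
        ∫ r in (0:ℝ)..a, -(1/k) * Real.sqrt (1 - (k * r) ^ 2) := rfl
    rw [h2, intervalIntegral.integral_const_mul, h1]
    ring
  -- assemble
  have hsin : Real.sqrt (1 - c ^ 2) = Real.sin γ :=
    (Real.sin_eq_sqrt_one_sub_cos_sq hγ0 (by linarith)).symm
  have harcsin : Real.arcsin c = Real.pi / 2 - γ := by
    rw [hc_def, ← Real.sin_pi_div_two_sub]
    exact Real.arcsin_sin (by linarith) (by linarith)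
  have hEi : IntervalIntegrable E MeasureTheory.volume 0 a :=
    ((hGc.sub huc)).intervalIntegrable 0 a
  have hsplit : (∫ r in (0:ℝ)..a, (E a - E r)) =
      a * E a - ∫ r in (0:ℝ)..a, E r := by
    rw [intervalIntegral.integral_sub (intervalIntegrable_const) hEi,
      intervalIntegral.integral_const]
    simp
  have hEint : (∫ r in (0:ℝ)..a, E r) =
      (∫ r in (0:ℝ)..a, G r) - ∫ r in (0:ℝ)..a, u r := by
    have : (∫ r in (0:ℝ)..a, E r) = ∫ r in (0:ℝ)..a, (G r - u r) := rfl
    rw [this, intervalIntegral.integral_sub (hGc.intervalIntegrable 0 a)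
      (huc.intervalIntegrable 0 a)]
  have hEa : E a = -(1/k) * Real.sin γ - u a := by
    have : E a = -(1/k) * Real.sqrt (1 - (k * a) ^ 2) - u a := rfl
    rw [this, hka, hsin]
  rw [hsplit, hEint, hIu, hIG, hEa, hsin, harcsin] at hgap
  -- hgap : 0 < a * (-(1/k)*sinγ - u a) - (-(1/k)*((1/(2k))*((π/2-γ) + c*sinγ)) - c/κ)
  have heq : a * (-(1/k) * Real.sin γ - u a) -
      (-(1/k) * ((1/(2*k)) * ((Real.pi/2 - γ) + c * Real.sin γ)) - c/κ) =
      (c/κ - a^2 * Real.sin γ/(2*c) + a^2 * (Real.pi/2 - γ)/(2*c^2)) - a * u a := by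
    rw [hk_def]
    field_simp
    ring
  rw [heq] at hgap
  have key : a * u a < c/κ - a^2 * Real.sin γ/(2*c) + a^2 * (Real.pi/2 - γ)/(2*c^2) := by
    linarith
  rw [Real.tan_eq_sin_div_cos, ← hc_def]
  have hX : a * (c / (κ * a) - a / 2 * (Real.sin γ / c) + a / (2 * c ^ 2) * (Real.pi / 2 - γ)) =
      c/κ - a^2 * Real.sin γ/(2*c) + a^2 * (Real.pi/2 - γ)/(2*c^2) := by
    field_simp
  rw [← hX] at key
  exact (mul_lt_mul_iff_right₀ ha).mp key
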